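/- For n ≥ 2 identical linear servers, any attack strength α ≥ 0, and any machine penetration level, every team equilibrium x̃ has equal loads on all non-attacked servers: x̃_i = x̃_j for all i, j > 1. -/

import Mathlib

open Finset

/-- System cost `C^α(x) = (1/n) ∑ᵢ xᵢ τᵢ(xᵢ) + α x₁ / n` (server 1 is index 0). -/
noncomputable def cost (n : ℕ) [NeZero n] (τ : Fin n → ℝ → ℝ) (α : ℝ) (x : Fin n → ℝ) : ℝ :=
  (∑ i, x i * τ i (x i)) / (n : ℝ) + α * x 0 / (n : ℝ)

/-- Attacked delay functions: `τ₁^α = τ₁ + α`, `τᵢ^α = τᵢ` for `i > 1`. -/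
noncomputable def tauA (n : ℕ) [NeZero n] (τ : Fin n → ℝ → ℝ) (α : ℝ) (i : Fin n) (z : ℝ) : ℝ :=
  τ i z + if i = 0 then α else 0

/-- A (partial) scheduling profile of total mass `mass`: nonnegative with entries summing to `mass`. -/
def IsProfile (n : ℕ) (mass : ℝ) (x : Fin n → ℝ) : Prop :=
  (∀ i, 0 ≤ x i) ∧ ∑ i, x i = mass

/-- Team equilibrium: the selfish mass `n - ∑ r k` is scheduled by `xs`, machine `k`
schedules mass `r k` via `xk k`; every machine schedules globally optimally given the
others, and every selfish job is on a minimum-delay server. -/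
def IsTeamEq (n m : ℕ) [NeZero n] (τ : Fin n → ℝ → ℝ) (α : ℝ) (r : Fin m → ℝ)
    (xs : Fin n → ℝ) (xk : Fin m → Fin n → ℝ) : Prop :=
  IsProfile n ((n : ℝ) - ∑ k, r k) xs ∧
  (∀ k, IsProfile n (r k) (xk k)) ∧
  (∀ k, ∀ y : Fin n → ℝ, IsProfile n (r k) y →
    cost n τ α (xs + ∑ j, xk j) ≤ cost n τ α (xs + y + ∑ j ∈ univ.erase k, xk j)) ∧
  (∀ i, 0 < xs i → ∀ j,
    tauA n τ α i ((xs + ∑ l, xk l) i) ≤ tauA n τ α j ((xs + ∑ l, xk l) j))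

/-- Identical linear delay functions `τᵢ(x) = x`. -/
def lin (n : ℕ) : Fin n → ℝ → ℝ := fun _ z => z

/-- with identical linear servers, every team equilibrium places equal
loads on all non-attacked servers. -/
theorem linear_equal_loads (n m : ℕ) [NeZero n] (hn : 2 ≤ n) (hm : 1 ≤ m)
    (α : ℝ) (hα : 0 ≤ α)
    (r : Fin m → ℝ) (hr : ∀ k, 0 ≤ r k) (hrsum : ∑ k, r k ≤ (n : ℝ))
    (xs : Fin n → ℝ) (xk : Fin m → Fin n → ℝ)
    (heq : IsTeamEq n m (lin n) α r xs xk) :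
    ∀ i j : Fin n, i ≠ 0 → j ≠ 0 →
      (xs + ∑ l, xk l) i = (xs + ∑ l, xk l) j := by
  obtain ⟨hs, hk, hopt, hself⟩ := heq
  set x : Fin n → ℝ := xs + ∑ l, xk l with hxdef
  have hnpos : (0:ℝ) < n := by
    exact_mod_cast Nat.pos_of_ne_zero (NeZero.ne n)
  have key : ∀ i j : Fin n, i ≠ 0 → j ≠ 0 → x i ≤ x j := by
    intro i j hi hj
    by_contra hlt
    push_neg at hlt
    have hij : i ≠ j := by rintro rfl; exact lt_irrefl _ hlt
    by_cases hsi : 0 < xs i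
    · have h := hself i hsi j
      simp only [tauA, lin, if_neg hi, if_neg hj, add_zero] at h
      exact absurd h (not_le.mpr hlt)
    · have hxsi : xs i = 0 := le_antisymm (not_lt.mp hsi) (hs.1 i)
      have hxi : x i = xs i + ∑ l, xk l i := by
        simp [hxdef, Finset.sum_apply]
      have hxj_nonneg : 0 ≤ x j := by
        have : x j = xs j + ∑ l, xk l j := by simp [hxdef, Finset.sum_apply]
        rw [this]
        exact add_nonneg (hs.1 j) (Finset.sum_nonneg fun l _ => (hk l).1 j)
      have hsumpos : 0 < ∑ l, xk l i := by
        have : 0 < x i := lt_of_le_of_lt hxj_nonneg hlt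
        rw [hxi, hxsi, zero_add] at this; exact this
      have hexk : ∃ k, 0 < xk k i := by
        by_contra hc
        push_neg at hc
        exact absurd hsumpos (not_lt.mpr (Finset.sum_nonpos fun l _ => hc l))
      obtain ⟨k, hki⟩ := hexk
      set d : ℝ := x i - x j with hd
      have hdpos : 0 < d := sub_pos.mpr hlt
      set δ : ℝ := min (xk k i) (d / 2) with hδ
      have hδpos : 0 < δ := lt_min hki (by linarith)
      have hδ1 : δ ≤ xk k i := min_le_left _ _
      have hδ2 : δ ≤ d / 2 := min_le_right _ _
      set f : Fin n → ℝ := fun l => if l = j then 1 else 0 with hf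
      set g : Fin n → ℝ := fun l => if l = i then 1 else 0 with hg
      set y : Fin n → ℝ := fun l => xk k l + δ * f l - δ * g l with hy
      have hyprof : IsProfile n (r k) y := by
        constructor
        · intro l
          have h0 := (hk k).1 l
          have hyl : y l = xk k l + δ * (if l = j then 1 else 0)
              - δ * (if l = i then 1 else 0) := rfl
          rw [hyl]
          by_cases hli : l = i
          · have hlj : ¬ l = j := by rw [hli]; exact hij
            rw [if_pos hli, if_neg hlj]
            have h1 : xk k i ≤ xk k l := le_of_eq (by rw [hli])
            linarith
          · by_cases hlj : l = j
            · rw [if_pos hlj, if_neg hli]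
              linarith [hδpos.le]
            · rw [if_neg hli, if_neg hlj]
              linarith
        · have hsf : ∑ l, f l = 1 := by
            simp [hf, Finset.sum_ite_eq']
          have hsg : ∑ l, g l = 1 := by
            simp [hg, Finset.sum_ite_eq']
          simp only [hy, Finset.sum_add_distrib, Finset.sum_sub_distrib,
            ← Finset.mul_sum, hsf, hsg, (hk k).2]
          ring
      have hxk_split : xk k + ∑ l ∈ univ.erase k, xk l = ∑ l, xk l := by
        exact Finset.add_sum_erase univ xk (Finset.mem_univ k)
      have hprof_eq : xs + y + ∑ l ∈ univ.erase k, xk l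
          = fun l => x l + (δ * f l - δ * g l) := by
        funext l
        have h1 : (∑ l' ∈ univ.erase k, xk l') l = (∑ l', xk l') l - xk k l := by
          rw [← hxk_split]; simp
        simp only [Pi.add_apply, hy, hxdef, h1]
        ring
      have hcost := hopt k y hyprof
      rw [hprof_eq] at hcost
      -- compute the two costs
      have hfg : ∀ l, f l * g l = 0 := by
        intro l
        by_cases hlj : l = j
        · subst hlj
          simp [hf, hg, Ne.symm hij]
        · simp [hf, hlj]
      have hff : ∀ l, f l * f l = f l := by
        intro l; by_cases hlj : l = j <;> simp [hf, hlj]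
      have hgg : ∀ l, g l * g l = g l := by
        intro l; by_cases hli : l = i <;> simp [hg, hli]
      have hsf : ∑ l, f l = 1 := by simp [hf, Finset.sum_ite_eq']
      have hsg : ∑ l, g l = 1 := by simp [hg, Finset.sum_ite_eq']
      have hsxf : ∑ l, x l * f l = x j := by
        have : ∀ l, x l * f l = if l = j then x l else 0 := by
          intro l; by_cases hlj : l = j <;> simp [hf, hlj]
        simp [this, Finset.sum_ite_eq']
      have hsxg : ∑ l, x l * g l = x i := by
        have : ∀ l, x l * g l = if l = i then x l else 0 := by
          intro l; by_cases hli : l = i <;> simp [hg, hli]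
        simp [this, Finset.sum_ite_eq']
      have hq0 : δ * f 0 - δ * g 0 = 0 := by
        have h1 : (0:Fin n) ≠ j := fun h => hj h.symm
        have h2 : (0:Fin n) ≠ i := fun h => hi h.symm
        simp [hf, hg, h1, h2]
      have hsum_expand :
          ∑ l, (x l + (δ * f l - δ * g l)) * (x l + (δ * f l - δ * g l))
            = (∑ l, x l * x l) + (2 * δ * (x j - x i) + 2 * δ ^ 2) := by
        have hpt : ∀ l, (x l + (δ * f l - δ * g l)) * (x l + (δ * f l - δ * g l))
            = x l * x l + 2 * δ * (x l * f l) - 2 * δ * (x l * g l)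
              + δ ^ 2 * (f l * f l) - 2 * δ ^ 2 * (f l * g l) + δ ^ 2 * (g l * g l) := by
          intro l; ring
        rw [Finset.sum_congr rfl fun l _ => hpt l]
        simp only [Finset.sum_add_distrib, Finset.sum_sub_distrib, ← Finset.mul_sum,
          hsxf, hsxg]
        have h1 : ∑ l, f l * f l = 1 := by
          rw [Finset.sum_congr rfl fun l _ => hff l, hsf]
        have h2 : ∑ l, g l * g l = 1 := by
          rw [Finset.sum_congr rfl fun l _ => hgg l, hsg]
        have h3 : ∑ l, f l * g l = 0 := by
          rw [Finset.sum_congr rfl fun l _ => hfg l]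
          simp
        rw [h1, h2, h3]
        ring
      have hcost_ineq : (0:ℝ) ≤ 2 * δ * (x j - x i) + 2 * δ ^ 2 := by
        simp only [cost, lin] at hcost
        rw [hq0] at hcost
        simp only [add_zero] at hcost
        rw [hsum_expand] at hcost
        have := sub_nonneg.mpr hcost
        have h2 : (2 * δ * (x j - x i) + 2 * δ ^ 2) / n =
            ((∑ l, x l * x l) + (2 * δ * (x j - x i) + 2 * δ ^ 2)) / ↑n + α * x 0 / ↑n
              - ((∑ l, x l * x l) / ↑n + α * x 0 / ↑n) := by
          field_simp
          ring
        have h3 : 0 ≤ (2 * δ * (x j - x i) + 2 * δ ^ 2) / n := by rw [h2]; exact this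
        have h4 := mul_nonneg h3 hnpos.le
        rwa [div_mul_cancel₀ _ (ne_of_gt hnpos)] at h4
      -- derive contradiction
      have : x j - x i + δ ≤ -(d/2) := by
        simp only [hd] at hδ2 ⊢
        linarith
      nlinarith [hδpos]
  intro i j hi hj
  exact le_antisymm (key i j hi hj) (key j i hj hi)
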